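/- Let R be a Noetherian commutative ring, I ⊆ R a proper ideal, M a nonzero finitely generated R-module with IM ≠ M, and a₁,…,a_k ∈ I an M-regular sequence. Then depth(I,M) = k if and only if there exists m ∈ M with m ∉ (a₁,…,a_k)M and I·m ⊆ (a₁,…,a_k)M. -/

import Mathlib

open RingTheory.Sequence

open Submodule Ideal
open scoped Pointwise

universe u v

/-! ### Finiteness of associated primes -/

section AssPrimes
variable {R : Type*} [CommRing R] {M : Type*} [AddCommGroup M] [Module R M]

theorem ReesAux.assPrimes_subset_union [IsNoetherianRing R] (M' : Submodule R M) :
    associatedPrimes R M ⊆ associatedPrimes R M' ∪ associatedPrimes R (M ⧸ M') := by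
  intro p hpa
  obtain ⟨hp, x, hx⟩ := isAssociatedPrime_iff.mp hpa
  by_cases hcase : ∀ b : R, b • x ∈ M' → b • x = 0
  · right
    refine isAssociatedPrime_iff.mpr ⟨hp, M'.mkQ x, ?_⟩
    ext a
    rw [hx, Submodule.mem_colon_singleton,
      Submodule.mem_colon_singleton, Submodule.mem_bot, Submodule.mem_bot, ← map_smul, Submodule.mkQ_apply,
      Submodule.Quotient.mk_eq_zero]
    exact ⟨fun h => h ▸ M'.zero_mem, fun h => hcase a h⟩
  · left
    push_neg at hcase
    obtain ⟨b, hbM, hb0⟩ := hcase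
    have hbp : b ∉ p := fun hbp => hb0 (by
      rwa [hx, Submodule.mem_colon_singleton, Submodule.mem_bot] at hbp)
    refine isAssociatedPrime_iff.mpr ⟨hp, ⟨b • x, hbM⟩, ?_⟩
    ext a
    rw [Submodule.mem_colon_singleton, Submodule.mem_bot]
    have : (a • (⟨b • x, hbM⟩ : M') = 0) ↔ a * b ∈ p := by
      rw [hx, Submodule.mem_colon_singleton, Submodule.mem_bot, mul_smul, Subtype.ext_iff]
      simp
    rw [this, hp.mul_mem_iff_mem_or_mem]
    simp [hbp]

theorem ReesAux.assPrimes_quot_finite [IsNoetherianRing R] [Module.Finite R M]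
    (N : Submodule R M) : (associatedPrimes R (M ⧸ N)).Finite := by
  by_contra hcon
  obtain ⟨N₀, hN₀, hmax⟩ := set_has_maximal_iff_noetherian.mpr
    (isNoetherian_of_isNoetherianRing_of_finite R M)
    {N : Submodule R M | ¬ (associatedPrimes R (M ⧸ N)).Finite} ⟨N, hcon⟩
  have hne : (associatedPrimes R (M ⧸ N₀)).Nonempty := by
    rcases Set.eq_empty_or_nonempty (associatedPrimes R (M ⧸ N₀)) with h | h
    · exact absurd (h ▸ Set.finite_empty) hN₀
    · exact h
  obtain ⟨p, hpa⟩ := hne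
  obtain ⟨hp, x, hx⟩ := isAssociatedPrime_iff.mp hpa
  have hx0 : x ≠ 0 := by
    rintro rfl
    rw [show (⊥ : Submodule R (M ⧸ N₀)).colon {0} = ⊤ by
      ext a; simp [Submodule.mem_colon_singleton]] at hx
    exact hp.ne_top hx
  set K : Submodule R (M ⧸ N₀) := R ∙ x with hK
  set N' : Submodule R M := Submodule.comap N₀.mkQ K with hN'
  have hmap : Submodule.map N₀.mkQ N' = K :=
    Submodule.map_comap_eq_of_surjective N₀.mkQ_surjective K
  have hle : N₀ ≤ N' := fun m hm => by
    simp only [hN', Submodule.mem_comap, Submodule.mkQ_apply,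
      (Submodule.Quotient.mk_eq_zero N₀).mpr hm]
    exact K.zero_mem
  have hlt : N₀ < N' := by
    obtain ⟨u, hu⟩ := N₀.mkQ_surjective x
    refine lt_of_le_of_ne hle fun h => ?_
    have huN' : u ∈ N' := by
      simp only [hN', Submodule.mem_comap, hu]
      exact Submodule.mem_span_singleton_self x
    rw [← h] at huN'
    exact hx0 (by rw [← hu, Submodule.mkQ_apply, Submodule.Quotient.mk_eq_zero]; exact huN')
  have hfin' : (associatedPrimes R (M ⧸ N')).Finite := by
    by_contra h
    exact hmax N' h hlt
  have hKfin : (associatedPrimes R K).Finite := by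
    set f := LinearMap.toSpanSingleton R (M ⧸ N₀) x with hf
    have hker : LinearMap.ker f = (R ∙ x).annihilator := by
      ext a
      rw [LinearMap.mem_ker, Submodule.mem_annihilator_span_singleton]
      rfl
    have e : (R ⧸ p) ≃ₗ[R] K :=
      (Submodule.quotEquivOfEq p (LinearMap.ker f) (hx.trans (by
        ext a; rw [Submodule.mem_colon_singleton, Submodule.mem_bot, LinearMap.mem_ker]; rfl))) ≪≫ₗ
        (f.quotKerEquivRange) ≪≫ₗ
        (LinearEquiv.ofEq _ _ (LinearMap.span_singleton_eq_range R _ x).symm)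
    rw [← LinearEquiv.AssociatedPrimes.eq e,
      associatedPrimes.eq_singleton_of_isPrimary hp.isPrimary]
    exact Set.finite_singleton _
  have hQfin : (associatedPrimes R ((M ⧸ N₀) ⧸ K)).Finite := by
    have e : ((M ⧸ N₀) ⧸ K) ≃ₗ[R] M ⧸ N' := by
      rw [← hmap]
      exact Submodule.quotientQuotientEquivQuotient N₀ N' hle
    rw [LinearEquiv.AssociatedPrimes.eq e]
    exact hfin'
  exact hN₀ (Set.Finite.subset (hKfin.union hQfin) (ReesAux.assPrimes_subset_union K))

theorem ReesAux.assPrimes_finite [IsNoetherianRing R] [Module.Finite R M] :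
    (associatedPrimes R M).Finite := by
  have e : (M ⧸ (⊥ : Submodule R M)) ≃ₗ[R] M := Submodule.quotEquivOfEqBot ⊥ rfl
  rw [← LinearEquiv.AssociatedPrimes.eq e]
  exact ReesAux.assPrimes_quot_finite ⊥

end AssPrimes

/-! ### Zero divisors and prime avoidance -/

section ZD
variable {R : Type*} [CommRing R] {M : Type*} [AddCommGroup M] [Module R M]

theorem ReesAux.not_isSMulRegular_iff_exists (a : R) :
    (¬ IsSMulRegular M a) ↔ ∃ x : M, x ≠ 0 ∧ a • x = 0 := by
  constructor
  · intro h
    obtain ⟨x, y, hxy, hne⟩ := Function.not_injective_iff.mp h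
    exact ⟨x - y, sub_ne_zero.mpr hne, by rw [smul_sub, hxy, sub_self]⟩
  · rintro ⟨x, hx, hax⟩ h
    exact hx (h (show a • x = a • 0 by rw [hax, smul_zero]))

theorem ReesAux.exists_ann_of_forall_not_isSMulRegular [IsNoetherianRing R] [Module.Finite R M]
    [Nontrivial M] (I : Ideal R) (h : ∀ a ∈ I, ¬ IsSMulRegular M a) :
    ∃ m : M, m ≠ 0 ∧ ∀ a ∈ I, a • m = 0 := by
  classical
  have hfin : (associatedPrimes R M).Finite := ReesAux.assPrimes_finite
  have hsub : (I : Set R) ⊆ ⋃ p ∈ hfin.toFinset, (p : Set R) := by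
    intro a ha
    have h2 : a ∈ ⋃ p ∈ associatedPrimes R M, (p : Set R) := by
      rw [biUnion_associatedPrimes_eq_zero_divisors]
      exact (ReesAux.not_isSMulRegular_iff_exists a).mp (h a ha)
    obtain ⟨p, hp, hap⟩ := Set.mem_iUnion₂.mp h2
    exact Set.mem_iUnion₂.mpr ⟨p, hfin.mem_toFinset.mpr hp, hap⟩
  obtain ⟨p, hpT, hIp⟩ := (Ideal.subset_union_prime ⊥ ⊥
    (fun p hp _ _ => (hfin.mem_toFinset.mp hp).isPrime)).mp hsub
  obtain ⟨hp, x, hx⟩ := isAssociatedPrime_iff.mp (hfin.mem_toFinset.mp hpT)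
  have hx0 : x ≠ 0 := by
    rintro rfl
    rw [show (⊥ : Submodule R M).colon {0} = ⊤ by
      ext a; simp [Submodule.mem_colon_singleton]] at hx
    exact hp.ne_top hx
  refine ⟨x, hx0, fun a ha => ?_⟩
  have := hIp ha
  rwa [hx, Submodule.mem_colon_singleton, Submodule.mem_bot] at this

theorem ReesAux.exists_isSMulRegular_on_all [IsNoetherianRing R] [Module.Finite R M]
    (I : Ideal R) (s : Finset (Submodule R M))
    (h : ∀ N ∈ s, ∃ a ∈ I, IsSMulRegular (M ⧸ N) a) :
    ∃ z ∈ I, ∀ N ∈ s, IsSMulRegular (M ⧸ N) z := by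
  classical
  by_contra hcon
  push_neg at hcon
  set T : Finset (Ideal R) :=
    s.attach.biUnion
      (fun N => (ReesAux.assPrimes_finite (M := M ⧸ (N : Submodule R M))).toFinset) with hT
  have hTprime : ∀ p ∈ T, p.IsPrime := by
    intro p hp
    obtain ⟨N, _, hpN⟩ := Finset.mem_biUnion.mp hp
    exact (Set.Finite.mem_toFinset _ |>.mp hpN).isPrime
  have hsub : (I : Set R) ⊆ ⋃ p ∈ T, (p : Set R) := by
    intro a ha
    obtain ⟨N, hNs, hNreg⟩ := hcon a ha
    have h2 : a ∈ ⋃ p ∈ associatedPrimes R (M ⧸ N), (p : Set R) := by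
      rw [biUnion_associatedPrimes_eq_zero_divisors]
      exact (ReesAux.not_isSMulRegular_iff_exists a).mp hNreg
    obtain ⟨p, hp, hap⟩ := Set.mem_iUnion₂.mp h2
    refine Set.mem_iUnion₂.mpr ⟨p, Finset.mem_biUnion.mpr
      ⟨⟨N, hNs⟩, Finset.mem_attach _ _, (Set.Finite.mem_toFinset _).mpr hp⟩, hap⟩
  obtain ⟨p, hpT, hIp⟩ := (Ideal.subset_union_prime ⊥ ⊥
    (fun p hp _ _ => hTprime p hp)).mp hsub
  obtain ⟨⟨N, hNs⟩, -, hpN⟩ := Finset.mem_biUnion.mp hpT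
  obtain ⟨a, haI, hareg⟩ := h N hNs
  have : a ∈ ⋃ q ∈ associatedPrimes R (M ⧸ N), (q : Set R) :=
    Set.mem_iUnion₂.mpr ⟨p, (Set.Finite.mem_toFinset _).mp hpN, hIp haI⟩
  rw [biUnion_associatedPrimes_eq_zero_divisors] at this
  exact (ReesAux.not_isSMulRegular_iff_exists a).mpr this hareg

end ZD

/-! ### The annihilator-witness predicate `ZAnn` -/

section Zpred
variable {R : Type*} [CommRing R] {M : Type*} [AddCommGroup M] [Module R M]

theorem ReesAux.mem_span_singleton_smul_top {x : R} {m : M} :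
    m ∈ (Ideal.span {x} • ⊤ : Submodule R M) ↔ ∃ u : M, x • u = m := by
  constructor
  · intro hm
    refine Submodule.smul_induction_on hm ?_ ?_
    · rintro r hr n -
      obtain ⟨c, rfl⟩ := Ideal.mem_span_singleton'.mp hr
      exact ⟨c • n, by rw [smul_smul, mul_comm]⟩
    · rintro m₁ m₂ ⟨u₁, rfl⟩ ⟨u₂, rfl⟩
      exact ⟨u₁ + u₂, smul_add x u₁ u₂⟩
  · rintro ⟨u, rfl⟩
    exact Submodule.smul_mem_smul (Ideal.mem_span_singleton_self x) trivial

theorem ReesAux.isSMulRegular_iff_smul_eq_zero (r : R) :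
    IsSMulRegular M r ↔ ∀ x : M, r • x = 0 → x = 0 := by
  constructor
  · intro h x hx
    exact h (show r • x = r • 0 by rw [hx, smul_zero])
  · intro h a b hab
    have : r • (a - b) = 0 := by
      rw [smul_sub, show r • a = r • b from hab, sub_self]
    exact sub_eq_zero.mp (h _ this)

theorem ReesAux.isSMulRegular_congr_equiv {N N' : Type*} [AddCommGroup N] [Module R N]
    [AddCommGroup N'] [Module R N'] (e : N ≃ₗ[R] N') (r : R) :
    IsSMulRegular N r ↔ IsSMulRegular N' r := by
  rw [ReesAux.isSMulRegular_iff_smul_eq_zero, ReesAux.isSMulRegular_iff_smul_eq_zero]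
  constructor
  · intro h x hx
    obtain ⟨y, rfl⟩ := e.surjective x
    rw [← map_smul] at hx
    rw [h y (by simpa using e.injective (by simpa using hx)), map_zero]
  · intro h x hx
    have : r • e x = 0 := by rw [← map_smul, hx, map_zero]
    simpa using congrArg e.symm (h _ this) |>.trans (map_zero _)

theorem ReesAux.isSMulRegular_quot_iff (r : R) (p : Submodule R M) :
    IsSMulRegular (M ⧸ p) r ↔ ∀ m : M, r • m ∈ p → m ∈ p := by
  rw [ReesAux.isSMulRegular_iff_smul_eq_zero]
  constructor
  · intro h m hm
    have := h (p.mkQ m) (by rw [← map_smul, mkQ_apply, Submodule.Quotient.mk_eq_zero]; exact hm)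
    rwa [mkQ_apply, Submodule.Quotient.mk_eq_zero] at this
  · intro h x hx
    obtain ⟨m, rfl⟩ := p.mkQ_surjective x
    rw [mkQ_apply, Submodule.Quotient.mk_eq_zero]
    refine h m ?_
    rw [← Submodule.Quotient.mk_eq_zero p, ← mkQ_apply, map_smul]
    exact hx

/-- The key predicate: there is `m ∉ JM` with `I•m ⊆ JM`. -/
def ZAnn (I J : Ideal R) (M : Type*) [AddCommGroup M] [Module R M] : Prop :=
  ∃ m : M, m ∉ (J • ⊤ : Submodule R M) ∧ ∀ a ∈ I, a • m ∈ (J • ⊤ : Submodule R M)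

theorem ReesAux.zann_iff_quot {I J : Ideal R} :
    ZAnn I J M ↔ ∃ m : M ⧸ (J • ⊤ : Submodule R M), m ≠ 0 ∧ ∀ a ∈ I, a • m = 0 := by
  constructor
  · rintro ⟨m, hm, hIm⟩
    refine ⟨(J • ⊤ : Submodule R M).mkQ m, ?_, fun a ha => ?_⟩
    · rw [mkQ_apply, ne_eq, Submodule.Quotient.mk_eq_zero]; exact hm
    · rw [← map_smul, mkQ_apply, Submodule.Quotient.mk_eq_zero]; exact hIm a ha
  · rintro ⟨mbar, h0, hI⟩
    obtain ⟨m, rfl⟩ := (J • ⊤ : Submodule R M).mkQ_surjective mbar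
    refine ⟨m, fun hm => h0 ?_, fun a ha => ?_⟩
    · rw [mkQ_apply, Submodule.Quotient.mk_eq_zero]; exact hm
    · rw [← Submodule.Quotient.mk_eq_zero (J • ⊤ : Submodule R M), ← mkQ_apply, map_smul]
      exact hI a ha

theorem ReesAux.annwit_congr {I : Ideal R} {N N' : Type*} [AddCommGroup N] [Module R N]
    [AddCommGroup N'] [Module R N'] (e : N ≃ₗ[R] N') :
    (∃ n : N, n ≠ 0 ∧ ∀ a ∈ I, a • n = 0) ↔ (∃ n : N', n ≠ 0 ∧ ∀ a ∈ I, a • n = 0) := by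
  constructor
  · rintro ⟨n, h0, hI⟩
    exact ⟨e n, fun h => h0 (e.map_eq_zero_iff.mp h),
      fun a ha => by rw [← map_smul, hI a ha, map_zero]⟩
  · rintro ⟨n, h0, hI⟩
    exact ⟨e.symm n, fun h => h0 (e.symm.map_eq_zero_iff.mp h),
      fun a ha => by rw [← map_smul, hI a ha, map_zero]⟩

/-- `M ⧸ (J₁ ⊔ J₂)M ≃ (M ⧸ J₁M) ⧸ J₂(M ⧸ J₁M)`. -/
noncomputable def ReesAux.quotSupSmulEquiv (J₁ J₂ : Ideal R) :
    (M ⧸ ((J₁ ⊔ J₂) • ⊤ : Submodule R M)) ≃ₗ[R]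
      ((M ⧸ (J₁ • ⊤ : Submodule R M)) ⧸
        (J₂ • ⊤ : Submodule R (M ⧸ (J₁ • ⊤ : Submodule R M)))) :=
  quotEquivOfEq _ _ (Submodule.sup_smul J₁ J₂ ⊤) ≪≫ₗ
    (quotientQuotientEquivQuotientSup (J₁ • ⊤) (J₂ • ⊤)).symm ≪≫ₗ
      quotEquivOfEq _ _ (by rw [map_smul'', Submodule.map_top, range_mkQ])

theorem ReesAux.zann_sup_iff {I : Ideal R} (J₁ J₂ : Ideal R) :
    ZAnn I (J₁ ⊔ J₂) M ↔ ZAnn I J₂ (M ⧸ (J₁ • ⊤ : Submodule R M)) := by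
  rw [ReesAux.zann_iff_quot, ReesAux.zann_iff_quot]
  exact ReesAux.annwit_congr (ReesAux.quotSupSmulEquiv J₁ J₂)

/-- The elementary one-step exchange lemma. -/
theorem ReesAux.zann_span_singleton_swap {I : Ideal R} {x y : R}
    (hx : IsSMulRegular M x) (hy : IsSMulRegular M y) (hyI : y ∈ I)
    (h : ZAnn I (Ideal.span {x}) M) : ZAnn I (Ideal.span {y}) M := by
  obtain ⟨m, hm, hIm⟩ := h
  obtain ⟨m', hm' : x • m' = y • m⟩ := ReesAux.mem_span_singleton_smul_top.mp (hIm y hyI)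
  refine ⟨m', fun hmem => ?_, fun a ha => ?_⟩
  · obtain ⟨v, hv : y • v = m'⟩ := ReesAux.mem_span_singleton_smul_top.mp hmem
    apply hm
    rw [ReesAux.mem_span_singleton_smul_top]
    refine ⟨v, hy ?_⟩
    show y • (x • v) = y • m
    rw [smul_comm, hv, hm']
  · obtain ⟨u, hu : x • u = a • m⟩ := ReesAux.mem_span_singleton_smul_top.mp (hIm a ha)
    rw [ReesAux.mem_span_singleton_smul_top]
    refine ⟨u, hx ?_⟩
    show x • (y • u) = x • (a • m')
    rw [smul_comm x y u, hu, smul_comm y a m, ← hm', smul_comm x a m']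

end Zpred

/-! ### Transposition and bubbling of regular sequences -/

section D
variable {R : Type u} [CommRing R] {M : Type v} [AddCommGroup M] [Module R M]

open RingTheory.Sequence

theorem ReesAux.mem_pointwise_smul_top_iff {x : R} {m : M} :
    m ∈ (x • ⊤ : Submodule R M) ↔ ∃ u : M, x • u = m := by
  rw [← Submodule.ideal_span_singleton_smul]
  exact ReesAux.mem_span_singleton_smul_top

theorem ReesAux.isWeaklyRegular_pair_swap {x z : R} (hz : IsSMulRegular M z)
    (h : IsWeaklyRegular M [x, z]) : IsWeaklyRegular M [z, x] := by
  rw [isWeaklyRegular_cons_iff] at h ⊢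
  obtain ⟨hx, h2⟩ := h
  have hz' : IsSMulRegular (QuotSMulTop x M) z :=
    (isWeaklyRegular_singleton_iff _ z).mp h2
  refine ⟨hz, (isWeaklyRegular_singleton_iff _ x).mpr ?_⟩
  rw [ReesAux.isSMulRegular_quot_iff] at hz' ⊢
  intro n hn
  obtain ⟨n', hn' : z • n' = x • n⟩ := ReesAux.mem_pointwise_smul_top_iff.mp hn
  have hmem : n' ∈ (x • ⊤ : Submodule R M) :=
    hz' n' (by rw [hn']; exact ReesAux.mem_pointwise_smul_top_iff.mpr ⟨n, rfl⟩)
  obtain ⟨n'', rfl⟩ := ReesAux.mem_pointwise_smul_top_iff.mp hmem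
  rw [ReesAux.mem_pointwise_smul_top_iff]
  exact ⟨n'', hx (show x • (z • n'') = x • n by rw [smul_comm, hn'])⟩

theorem ReesAux.ofList_pair_comm (x z : R) : Ideal.ofList [x, z] = Ideal.ofList [z, x] := by
  have : { r : R | r ∈ [x, z] } = { r : R | r ∈ [z, x] } := by
    ext r; simp [or_comm]
  exact congrArg Ideal.span this

noncomputable def ReesAux.quotPairSwapEquiv (x z : R) :
    QuotSMulTop z (QuotSMulTop x M) ≃ₗ[R] QuotSMulTop x (QuotSMulTop z M) :=
  ((Submodule.quotOfListConsSMulTopEquivQuotSMulTopInner M x [z]) ≪≫ₗ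
    quotEquivOfEq _ _ (by rw [Ideal.ofList_singleton, ideal_span_singleton_smul])).symm ≪≫ₗ
  quotEquivOfEq _ _ (congrArg (· • ⊤) (ReesAux.ofList_pair_comm x z)) ≪≫ₗ
  ((Submodule.quotOfListConsSMulTopEquivQuotSMulTopInner M z [x]) ≪≫ₗ
    quotEquivOfEq _ _ (by rw [Ideal.ofList_singleton, ideal_span_singleton_smul]))

theorem ReesAux.isWeaklyRegular_cons_of_append {z : R} (xs : List R) :
    ∀ {M : Type v} [AddCommGroup M] [Module R M],
      IsWeaklyRegular M (xs ++ [z]) →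
      (∀ i, i ≤ xs.length →
        IsSMulRegular (M ⧸ (Ideal.ofList (xs.take i) • ⊤ : Submodule R M)) z) →
      IsWeaklyRegular M (z :: xs) := by
  induction xs with
  | nil => intro M _ _ h _; exact h
  | cons x xs ih =>
    intro M _ _ h hz
    rw [List.cons_append, isWeaklyRegular_cons_iff] at h
    obtain ⟨hx, h'⟩ := h
    have hz0 : IsSMulRegular M z := by
      have h0 := hz 0 (Nat.zero_le _)
      exact (ReesAux.isSMulRegular_congr_equiv
        (quotEquivOfEqBot _ (by rw [List.take_zero, Ideal.ofList_nil, bot_smul])) z).mp h0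
    have hzq : ∀ i, i ≤ xs.length →
        IsSMulRegular (QuotSMulTop x M ⧸
          (Ideal.ofList (xs.take i) • ⊤ : Submodule R (QuotSMulTop x M))) z := by
      intro i hi
      have h2 := hz (i + 1) (by simpa using Nat.succ_le_succ hi)
      rw [List.take_succ_cons] at h2
      exact (ReesAux.isSMulRegular_congr_equiv
        (Submodule.quotOfListConsSMulTopEquivQuotSMulTopInner M x (xs.take i)) z).mp h2
    have ihz : IsWeaklyRegular (QuotSMulTop x M) (z :: xs) := ih h' hzq
    rw [isWeaklyRegular_cons_iff] at ihz
    obtain ⟨hz1, h''⟩ := ihz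
    have hswap := ReesAux.isWeaklyRegular_pair_swap hz0 (by
      rw [isWeaklyRegular_cons_iff]
      exact ⟨hx, (isWeaklyRegular_singleton_iff _ z).mpr hz1⟩)
    rw [isWeaklyRegular_cons_iff] at hswap
    obtain ⟨-, hswap2⟩ := hswap
    have hxq : IsSMulRegular (QuotSMulTop z M) x :=
      (isWeaklyRegular_singleton_iff _ x).mp hswap2
    have h''' : IsWeaklyRegular (QuotSMulTop x (QuotSMulTop z M)) xs :=
      ((ReesAux.quotPairSwapEquiv x z).isWeaklyRegular_congr xs).mp h''
    rw [isWeaklyRegular_cons_iff]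
    exact ⟨hz0, by rw [isWeaklyRegular_cons_iff]; exact ⟨hxq, h'''⟩⟩

end D

/-! ### Rees' exchange theorem -/

section Rees
variable {R : Type u} [CommRing R]

open RingTheory.Sequence

theorem ReesAux.smul_top_ne_top_quot {I : Ideal R} {M : Type v} [AddCommGroup M] [Module R M]
    {p : Submodule R M} (hp : p ≤ I • ⊤) (h : I • (⊤ : Submodule R M) ≠ ⊤) :
    I • (⊤ : Submodule R (M ⧸ p)) ≠ ⊤ := by
  intro htop
  apply h
  have h1 : Submodule.map p.mkQ (I • ⊤ : Submodule R M) = I • (⊤ : Submodule R (M ⧸ p)) := by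
    rw [map_smul'', Submodule.map_top, range_mkQ]
  rw [← h1, Submodule.map_mkQ_eq_top] at htop
  rwa [sup_eq_right.mpr hp] at htop

theorem ReesAux.isWeaklyRegular_take {M : Type v} [AddCommGroup M] [Module R M]
    {rs : List R} (h : IsWeaklyRegular M rs) (n : ℕ) : IsWeaklyRegular M (rs.take n) :=
  ((isWeaklyRegular_append_iff M (rs.take n) (rs.drop n)).mp
    (by rw [List.take_append_drop]; exact h)).1

/-- Rees' exchange lemma: the witness property transfers between weakly regular
sequences in `I` of the same length. -/
theorem ReesAux.exchange [IsNoetherianRing R] (I : Ideal R) :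
    ∀ (n : ℕ) (M : Type v) [AddCommGroup M] [Module R M] [Module.Finite R M],
      I • (⊤ : Submodule R M) ≠ ⊤ → ∀ (xs ys : List R), xs.length = n → ys.length = n →
      (∀ r ∈ xs, r ∈ I) → (∀ r ∈ ys, r ∈ I) →
      IsWeaklyRegular M xs → IsWeaklyRegular M ys →
      ZAnn I (Ideal.ofList xs) M → ZAnn I (Ideal.ofList ys) M := by
  intro n
  induction n with
  | zero =>
    intro M _ _ _ _ xs ys hxl hyl _ _ _ _ hZ
    rw [List.length_eq_zero_iff.mp hxl] at hZ
    rw [List.length_eq_zero_iff.mp hyl]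
    exact hZ
  | succ n ih =>
    intro M _ _ _ hIM xs ys hxl hyl hxmem hymem hxwr hywr hZ
    classical
    have hxne : xs ≠ [] := by intro h; rw [h] at hxl; simp at hxl
    have hyne : ys ≠ [] := by intro h; rw [h] at hyl; simp at hyl
    set xl := xs.getLast hxne with hxldef
    set yl := ys.getLast hyne with hyldef
    have hxcat : xs.dropLast ++ [xl] = xs := List.dropLast_append_getLast hxne
    have hycat : ys.dropLast ++ [yl] = ys := List.dropLast_append_getLast hyne
    have hxs'len : xs.dropLast.length = n := by rw [List.length_dropLast, hxl]; rfl
    have hys'len : ys.dropLast.length = n := by rw [List.length_dropLast, hyl]; rfl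
    have hxtake : ∀ i, i ≤ n → xs.dropLast.take i = xs.take i := by
      intro i hi
      rw [List.dropLast_eq_take, List.take_take, hxl, Nat.add_sub_cancel, Nat.min_eq_left hi]
    have hytake : ∀ i, i ≤ n → ys.dropLast.take i = ys.take i := by
      intro i hi
      rw [List.dropLast_eq_take, List.take_take, hyl, Nat.add_sub_cancel, Nat.min_eq_left hi]
    have hxtaken : xs.dropLast.take n = xs.dropLast := by rw [← hxs'len, List.take_length]
    have hytaken : ys.dropLast.take n = ys.dropLast := by rw [← hys'len, List.take_length]
    -- choose z ∈ I regular on all the prefix quotients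
    set s : Finset (Submodule R M) :=
      (((List.range (n + 1)).map fun i => (Ideal.ofList (xs.take i) • ⊤ : Submodule R M)) ++
        ((List.range (n + 1)).map fun i =>
          (Ideal.ofList (ys.take i) • ⊤ : Submodule R M))).toFinset with hs
    obtain ⟨z, hzI, hzreg⟩ := ReesAux.exists_isSMulRegular_on_all I s (by
      intro N hN
      rw [hs, List.mem_toFinset, List.mem_append, List.mem_map, List.mem_map] at hN
      rcases hN with ⟨i, hi, rfl⟩ | ⟨i, hi, rfl⟩
      · rw [List.mem_range] at hi
        have hi' : i < xs.length := by rw [hxl]; exact hi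
        exact ⟨xs[i], hxmem _ (List.getElem_mem hi'), hxwr.regular_mod_prev i hi'⟩
      · rw [List.mem_range] at hi
        have hi' : i < ys.length := by rw [hyl]; exact hi
        exact ⟨ys[i], hymem _ (List.getElem_mem hi'), hywr.regular_mod_prev i hi'⟩)
    have hzx : ∀ i, i ≤ n →
        IsSMulRegular (M ⧸ (Ideal.ofList (xs.take i) • ⊤ : Submodule R M)) z := by
      intro i hi
      refine hzreg _ ?_
      rw [hs, List.mem_toFinset, List.mem_append]
      exact Or.inl (List.mem_map.mpr ⟨i, List.mem_range.mpr (Nat.lt_succ_of_le hi), rfl⟩)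
    have hzy : ∀ i, i ≤ n →
        IsSMulRegular (M ⧸ (Ideal.ofList (ys.take i) • ⊤ : Submodule R M)) z := by
      intro i hi
      refine hzreg _ ?_
      rw [hs, List.mem_toFinset, List.mem_append]
      exact Or.inr (List.mem_map.mpr ⟨i, List.mem_range.mpr (Nat.lt_succ_of_le hi), rfl⟩)
    -- bubble z to the front on both sides
    have hxwr' : IsWeaklyRegular M xs.dropLast := by
      rw [List.dropLast_eq_take]
      exact ReesAux.isWeaklyRegular_take hxwr _
    have hywr' : IsWeaklyRegular M ys.dropLast := by
      rw [List.dropLast_eq_take]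
      exact ReesAux.isWeaklyRegular_take hywr _
    have hzxd : ∀ i, i ≤ xs.dropLast.length →
        IsSMulRegular (M ⧸ (Ideal.ofList (xs.dropLast.take i) • ⊤ : Submodule R M)) z := by
      intro i hi
      rw [hxs'len] at hi
      rw [hxtake i hi]
      exact hzx i hi
    have hzyd : ∀ i, i ≤ ys.dropLast.length →
        IsSMulRegular (M ⧸ (Ideal.ofList (ys.dropLast.take i) • ⊤ : Submodule R M)) z := by
      intro i hi
      rw [hys'len] at hi
      rw [hytake i hi]
      exact hzy i hi
    have hzregx : IsSMulRegular (M ⧸ (Ideal.ofList xs.dropLast • ⊤ : Submodule R M)) z := by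
      have := hzxd n (le_of_eq hxs'len.symm)
      rwa [hxtaken] at this
    have hzregy : IsSMulRegular (M ⧸ (Ideal.ofList ys.dropLast • ⊤ : Submodule R M)) z := by
      have := hzyd n (le_of_eq hys'len.symm)
      rwa [hytaken] at this
    have hbubx : IsWeaklyRegular M (z :: xs.dropLast) := by
      refine ReesAux.isWeaklyRegular_cons_of_append xs.dropLast ?_ hzxd
      rw [isWeaklyRegular_append_iff]
      exact ⟨hxwr', (isWeaklyRegular_singleton_iff _ z).mpr hzregx⟩
    have hbuby : IsWeaklyRegular M (z :: ys.dropLast) := by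
      refine ReesAux.isWeaklyRegular_cons_of_append ys.dropLast ?_ hzyd
      rw [isWeaklyRegular_append_iff]
      exact ⟨hywr', (isWeaklyRegular_singleton_iff _ z).mpr hzregy⟩
    -- transfer the witness through the exchange
    rw [← hxcat, Ideal.ofList_append, Ideal.ofList_singleton, ReesAux.zann_sup_iff] at hZ
    have hxlreg : IsSMulRegular (M ⧸ (Ideal.ofList xs.dropLast • ⊤ : Submodule R M)) xl := by
      have := ((isWeaklyRegular_append_iff M xs.dropLast [xl]).mp
        (by rw [hxcat]; exact hxwr)).2
      exact (isWeaklyRegular_singleton_iff _ xl).mp this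
    have hylreg : IsSMulRegular (M ⧸ (Ideal.ofList ys.dropLast • ⊤ : Submodule R M)) yl := by
      have := ((isWeaklyRegular_append_iff M ys.dropLast [yl]).mp
        (by rw [hycat]; exact hywr)).2
      exact (isWeaklyRegular_singleton_iff _ yl).mp this
    have hZ2 : ZAnn I (Ideal.span {z}) (M ⧸ (Ideal.ofList xs.dropLast • ⊤ : Submodule R M)) :=
      ReesAux.zann_span_singleton_swap hxlreg hzregx hzI hZ
    rw [← ReesAux.zann_sup_iff, ← Ideal.ofList_singleton, ← Ideal.ofList_append] at hZ2
    have hid : Ideal.ofList (xs.dropLast ++ [z]) = Ideal.ofList ([z] ++ xs.dropLast) := by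
      rw [Ideal.ofList_append, Ideal.ofList_append, sup_comm]
    rw [hid, Ideal.ofList_append, ReesAux.zann_sup_iff] at hZ2
    -- set up the induction hypothesis on M ⧸ zM
    have hofzle : Ideal.ofList [z] ≤ I := by
      rw [Ideal.ofList_singleton, Ideal.span_le]
      exact Set.singleton_subset_iff.mpr hzI
    have hIM' : I • (⊤ : Submodule R (M ⧸ (Ideal.ofList [z] • ⊤ : Submodule R M))) ≠ ⊤ :=
      ReesAux.smul_top_ne_top_quot (Submodule.smul_mono_left hofzle) hIM
    have hxwrq : IsWeaklyRegular (M ⧸ (Ideal.ofList [z] • ⊤ : Submodule R M)) xs.dropLast :=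
      ((isWeaklyRegular_append_iff M [z] xs.dropLast).mp hbubx).2
    have hywrq : IsWeaklyRegular (M ⧸ (Ideal.ofList [z] • ⊤ : Submodule R M)) ys.dropLast :=
      ((isWeaklyRegular_append_iff M [z] ys.dropLast).mp hbuby).2
    have hxmem' : ∀ r ∈ xs.dropLast, r ∈ I := by
      intro r hr
      rw [List.dropLast_eq_take] at hr
      exact hxmem r (List.take_subset _ _ hr)
    have hymem' : ∀ r ∈ ys.dropLast, r ∈ I := by
      intro r hr
      rw [List.dropLast_eq_take] at hr
      exact hymem r (List.take_subset _ _ hr)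
    have hZ3 := ih (M ⧸ (Ideal.ofList [z] • ⊤ : Submodule R M)) hIM'
      xs.dropLast ys.dropLast hxs'len hys'len hxmem' hymem' hxwrq hywrq hZ2
    -- transfer back on the ys side
    rw [← ReesAux.zann_sup_iff, ← Ideal.ofList_append] at hZ3
    have hid' : Ideal.ofList ([z] ++ ys.dropLast) = Ideal.ofList (ys.dropLast ++ [z]) := by
      rw [Ideal.ofList_append, Ideal.ofList_append, sup_comm]
    rw [hid', Ideal.ofList_append, Ideal.ofList_singleton, ReesAux.zann_sup_iff] at hZ3
    have hylI : yl ∈ I := hymem yl (List.getLast_mem hyne)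
    have hZ4 : ZAnn I (Ideal.span {yl}) (M ⧸ (Ideal.ofList ys.dropLast • ⊤ : Submodule R M)) :=
      ReesAux.zann_span_singleton_swap hzregy hylreg hylI hZ3
    rw [← ReesAux.zann_sup_iff, ← Ideal.ofList_singleton, ← Ideal.ofList_append, hycat] at hZ4
    exact hZ4

/-- Any weakly regular sequence in `I` is no longer than a "maximal" one. -/
theorem ReesAux.length_le [IsNoetherianRing R] (I : Ideal R) (M : Type v) [AddCommGroup M]
    [Module R M] [Module.Finite R M] (hIM : I • (⊤ : Submodule R M) ≠ ⊤) {xs ys : List R}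
    (hxmem : ∀ r ∈ xs, r ∈ I) (hymem : ∀ r ∈ ys, r ∈ I)
    (hxwr : IsWeaklyRegular M xs) (hywr : IsWeaklyRegular M ys)
    (hZ : ZAnn I (Ideal.ofList xs) M) : ys.length ≤ xs.length := by
  by_contra hcon
  push_neg at hcon
  set n := xs.length with hn
  have h1 : (ys.take n).length = n := by rw [List.length_take]; exact Nat.min_eq_left hcon.le
  have hZ' : ZAnn I (Ideal.ofList (ys.take n)) M :=
    ReesAux.exchange I n M hIM xs (ys.take n) rfl h1 hxmem
      (fun r hr => hymem r (List.take_subset _ _ hr)) hxwr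
      (ReesAux.isWeaklyRegular_take hywr n) hZ
  obtain ⟨m, hm, hIm⟩ := hZ'
  have hreg := hywr.regular_mod_prev n hcon
  rw [ReesAux.isSMulRegular_quot_iff] at hreg
  exact hm (hreg m (hIm _ (hymem _ (List.getElem_mem hcon))))

end Rees
/-- The `I`-depth of `M`: the supremum of the lengths of `M`-regular sequences
with all entries in `I`. By Rees' theorem this is the common length of all maximal
`M`-regular sequences in `I`. -/
noncomputable def idealDepth {R : Type*} [CommRing R] (M : Type*) [AddCommGroup M] [Module R M]
    (I : Ideal R) : ℕ :=
  sSup {n : ℕ | ∃ rs : List R, rs.length = n ∧ (∀ r ∈ rs, r ∈ I) ∧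
    RingTheory.Sequence.IsRegular M rs}

theorem depth_eq_iff_exists_annihilated_mod
    {R : Type*} [CommRing R] [IsNoetherianRing R]
    (M : Type*) [AddCommGroup M] [Module R M] [Module.Finite R M] [Nontrivial M]
    (I : Ideal R) (hI : I ≠ ⊤) (hIM : I • (⊤ : Submodule R M) ≠ ⊤)
    (k : ℕ) (rs : List R) (hlen : rs.length = k) (hmem : ∀ r ∈ rs, r ∈ I)
    (hreg : RingTheory.Sequence.IsRegular M rs) :
    idealDepth M I = k ↔
      ∃ m : M, m ∉ (Ideal.ofList rs • ⊤ : Submodule R M) ∧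
        ∀ a ∈ I, a • m ∈ (Ideal.ofList rs • ⊤ : Submodule R M) := by
  classical
  have hZgoal : (∃ m : M, m ∉ (Ideal.ofList rs • ⊤ : Submodule R M) ∧
      ∀ a ∈ I, a • m ∈ (Ideal.ofList rs • ⊤ : Submodule R M)) ↔ ZAnn I (Ideal.ofList rs) M :=
    Iff.rfl
  -- basic facts
  have hofle : ∀ {xs : List R}, (∀ r ∈ xs, r ∈ I) → Ideal.ofList xs ≤ I := by
    intro xs h
    rw [Ideal.span_le]
    exact fun r hr => h r hr
  have hnetop : ∀ {xs : List R}, (∀ r ∈ xs, r ∈ I) →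
      (⊤ : Submodule R M) ≠ Ideal.ofList xs • ⊤ := by
    intro xs h htop
    exact hIM (le_antisymm le_top
      (le_of_eq_of_le htop (Submodule.smul_mono_left (hofle h))))
  have hregiff : ∀ {xs : List R}, (∀ r ∈ xs, r ∈ I) →
      (RingTheory.Sequence.IsRegular M xs ↔ RingTheory.Sequence.IsWeaklyRegular M xs) := by
    intro xs h
    rw [RingTheory.Sequence.isRegular_iff]
    exact and_iff_left (hnetop h)
  -- a maximal weakly regular sequence in I
  obtain ⟨J₀, hJ₀, hmax⟩ := set_has_maximal_iff_noetherian.mpr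
    (inferInstance : IsNoetherian R R)
    {J : Ideal R | ∃ xs : List R, (∀ r ∈ xs, r ∈ I) ∧
      RingTheory.Sequence.IsWeaklyRegular M xs ∧ Ideal.ofList xs = J}
    ⟨Ideal.ofList rs, rs, hmem, hreg.toIsWeaklyRegular, rfl⟩
  obtain ⟨xs₀, hmem₀, hwr₀, rfl⟩ := hJ₀
  have hnetop₀ := hnetop hmem₀
  have hnontriv : Nontrivial (M ⧸ (Ideal.ofList xs₀ • ⊤ : Submodule R M)) :=
    Submodule.Quotient.nontrivial_iff.mpr (Ne.symm hnetop₀)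
  have hZ₀ : ZAnn I (Ideal.ofList xs₀) M := by
    by_contra hcon
    have hex : ∃ a ∈ I, IsSMulRegular (M ⧸ (Ideal.ofList xs₀ • ⊤ : Submodule R M)) a := by
      by_contra hex
      push_neg at hex
      obtain ⟨mbar, h0, hI'⟩ := ReesAux.exists_ann_of_forall_not_isSMulRegular I hex
      exact hcon (ReesAux.zann_iff_quot.mpr ⟨mbar, h0, hI'⟩)
    obtain ⟨a, haI, hareg⟩ := hex
    have hmem₁ : ∀ r ∈ xs₀ ++ [a], r ∈ I := by
      intro r hr
      rcases List.mem_append.mp hr with h | h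
      · exact hmem₀ r h
      · rw [List.mem_singleton.mp h]; exact haI
    have hwr₁ : RingTheory.Sequence.IsWeaklyRegular M (xs₀ ++ [a]) :=
      (RingTheory.Sequence.isWeaklyRegular_append_iff M xs₀ [a]).mpr
        ⟨hwr₀, (RingTheory.Sequence.isWeaklyRegular_singleton_iff _ a).mpr hareg⟩
    have hlt : Ideal.ofList xs₀ < Ideal.ofList (xs₀ ++ [a]) := by
      rw [Ideal.ofList_append]
      refine lt_of_le_of_ne le_sup_left fun h => ?_
      have haJ : a ∈ Ideal.ofList xs₀ := by
        have ha2 : a ∈ Ideal.ofList xs₀ ⊔ Ideal.ofList [a] :=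
          (le_sup_right : Ideal.ofList [a] ≤ _)
            (by rw [Ideal.ofList_singleton]; exact Ideal.mem_span_singleton_self a)
        rwa [← h] at ha2
      obtain ⟨mbar, hmbar⟩ := exists_ne (0 : M ⧸ (Ideal.ofList xs₀ • ⊤ : Submodule R M))
      obtain ⟨m, rfl⟩ := (Ideal.ofList xs₀ • ⊤ : Submodule R M).mkQ_surjective mbar
      refine hmbar (hareg (show a • _ = a • 0 from ?_))
      rw [smul_zero, ← map_smul, Submodule.mkQ_apply, Submodule.Quotient.mk_eq_zero]
      exact Submodule.smul_mem_smul haJ Submodule.mem_top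
    exact hmax _ ⟨xs₀ ++ [a], hmem₁, hwr₁, rfl⟩ hlt
  -- the depth equals the length of xs₀
  have hub : ∀ n ∈ {n : ℕ | ∃ rs' : List R, rs'.length = n ∧ (∀ r ∈ rs', r ∈ I) ∧
      RingTheory.Sequence.IsRegular M rs'}, n ≤ xs₀.length := by
    rintro n ⟨ys, rfl, hymem, hyreg⟩
    exact ReesAux.length_le I M hIM hmem₀ hymem hwr₀ hyreg.toIsWeaklyRegular hZ₀
  have hmemS : xs₀.length ∈ {n : ℕ | ∃ rs' : List R, rs'.length = n ∧ (∀ r ∈ rs', r ∈ I) ∧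
      RingTheory.Sequence.IsRegular M rs'} :=
    ⟨xs₀, rfl, hmem₀, (hregiff hmem₀).mpr hwr₀⟩
  have hsup : idealDepth M I = xs₀.length := by
    rw [idealDepth]
    exact le_antisymm (csSup_le ⟨xs₀.length, hmemS⟩ hub) (le_csSup ⟨xs₀.length, hub⟩ hmemS)
  rw [hZgoal]
  constructor
  · intro hk
    have hlen₀ : xs₀.length = k := by rw [← hsup, hk]
    exact ReesAux.exchange I k M hIM xs₀ rs hlen₀ hlen hmem₀ hmem hwr₀
      hreg.toIsWeaklyRegular hZ₀
  · intro hZrs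
    have hlen₀ : xs₀.length = k := by
      refine le_antisymm ?_ ?_
      · have := ReesAux.length_le I M hIM hmem hmem₀ hreg.toIsWeaklyRegular hwr₀ hZrs
        rwa [hlen] at this
      · rw [← hlen]
        exact ReesAux.length_le I M hIM hmem₀ hmem hwr₀ hreg.toIsWeaklyRegular hZ₀
    rw [hsup, hlen₀]
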